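/- For every pair of positive integers l and r, there exists a finite connected simple graph G of order lr that admits a regular distance l-labeling of degree r. -/

import Mathlib

/-- `f` is a distance `l`-labeling of `G`: its image is `{0,…,l}` or `{1,…,l}`, and any two
distinct vertices sharing a label `k` are at graph distance exactly `k`. -/
def IsDistLabeling {V : Type*} (G : SimpleGraph V) (l : ℕ) (f : V → ℕ) : Prop :=
  (Set.range f = Set.Icc 0 l ∨ Set.range f = Set.Icc 1 l) ∧
    ∀ u v : V, u ≠ v → f u = f v → G.dist u v = f u

/-- A distance `l`-labeling is regular of degree `r` if every label `k ∈ {1,…,l}` is used by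
exactly `r` vertices. -/
def IsRegularDistLabeling {V : Type*} [Fintype V] [DecidableEq V]
    (G : SimpleGraph V) (l r : ℕ) (f : V → ℕ) : Prop :=
  IsDistLabeling G l f ∧
    ∀ k : ℕ, 1 ≤ k → k ≤ l → (Finset.univ.filter (fun v : V => f v = k)).card = r

/-- Root of the vertex `(k, i)`: the leg through `(k,i)` is attached to clique vertex `rt k i`. -/
def rt (k i : ℕ) : ℕ := if k % 2 = 1 then 0 else i

/-- Distance function on coordinates `(k, i)`: vertices `(0, i)` form a clique; for `k ≥ 1`,
vertex `(k, i)` sits at depth `(k+1)/2` on a path attached to clique vertex `rt k i`. -/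
def dN (k1 i1 k2 i2 : ℕ) : ℕ :=
  if k1 % 2 = k2 % 2 ∧ i1 = i2 then
    ((k1 + 1) / 2 - (k2 + 1) / 2) + ((k2 + 1) / 2 - (k1 + 1) / 2)
  else (k1 + 1) / 2 + (k2 + 1) / 2 + (if rt k1 i1 = rt k2 i2 then 0 else 1)

lemma rt_spec (k i : ℕ) : (k % 2 = 1 ∧ rt k i = 0) ∨ (k % 2 = 0 ∧ rt k i = i) := by
  unfold rt; split_ifs with h
  · exact Or.inl ⟨h, rfl⟩
  · exact Or.inr ⟨by omega, rfl⟩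

/-- Abstract description of a distance value `e` between points at depths `d1, d2`
on legs `L1, L2` with roots `R1, R2`. -/
def Form (d1 L1 R1 d2 L2 R2 e : ℕ) : Prop :=
  (L1 = L2 → R1 = R2) ∧
  ((L1 = L2 ∧ e = (d1 - d2) + (d2 - d1)) ∨
   (¬L1 = L2 ∧ R1 = R2 ∧ e = d1 + d2) ∨
   (¬L1 = L2 ∧ ¬R1 = R2 ∧ e = d1 + d2 + 1))

lemma dN_form (k1 i1 k2 i2 : ℕ) :
    Form ((k1 + 1) / 2) (k1 % 2 + 2 * i1) (rt k1 i1)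
      ((k2 + 1) / 2) (k2 % 2 + 2 * i2) (rt k2 i2) (dN k1 i1 k2 i2) := by
  constructor
  · intro hL
    have h : k1 % 2 = k2 % 2 ∧ i1 = i2 := by omega
    unfold rt
    rw [h.1, h.2]
  · by_cases hSL : k1 % 2 = k2 % 2 ∧ i1 = i2
    · exact Or.inl ⟨by omega, by rw [dN, if_pos hSL]⟩
    · by_cases hR : rt k1 i1 = rt k2 i2
      · exact Or.inr (Or.inl ⟨by omega, hR, by rw [dN, if_neg hSL, if_pos hR]; omega⟩)
      · exact Or.inr (Or.inr ⟨by omega, hR, by rw [dN, if_neg hSL, if_neg hR]⟩)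

lemma Form.tri {d1 L1 R1 d2 L2 R2 d3 L3 R3 e12 e23 e13 : ℕ}
    (h12 : Form d1 L1 R1 d2 L2 R2 e12) (h23 : Form d2 L2 R2 d3 L3 R3 e23)
    (h13 : Form d1 L1 R1 d3 L3 R3 e13) : e13 ≤ e12 + e23 := by
  obtain ⟨c12, h12⟩ := h12
  obtain ⟨c23, h23⟩ := h23
  obtain ⟨c13, h13⟩ := h13
  rcases h12 with h12|h12|h12 <;> rcases h23 with h23|h23|h23 <;>
    rcases h13 with h13|h13|h13 <;> omega

lemma dN_triangle (k1 i1 k2 i2 k3 i3 : ℕ) :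
    dN k1 i1 k3 i3 ≤ dN k1 i1 k2 i2 + dN k2 i2 k3 i3 :=
  Form.tri (dN_form k1 i1 k2 i2) (dN_form k2 i2 k3 i3) (dN_form k1 i1 k3 i3)

lemma dN_self (k i : ℕ) : dN k i k i = 0 := by
  have F := dN_form k i k i
  unfold Form at F
  omega

lemma dN_symm (k1 i1 k2 i2 : ℕ) : dN k1 i1 k2 i2 = dN k2 i2 k1 i1 := by
  have F1 := dN_form k1 i1 k2 i2
  have F2 := dN_form k2 i2 k1 i1
  unfold Form at F1 F2
  omega

lemma dN_eq_zero {k1 i1 k2 i2 : ℕ} (h : dN k1 i1 k2 i2 = 0) : k1 = k2 ∧ i1 = i2 := by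
  have F := dN_form k1 i1 k2 i2
  have r1 := rt_spec k1 i1
  have r2 := rt_spec k2 i2
  unfold Form at F
  omega

lemma dN_same_k {k i1 i2 : ℕ} (h : i1 ≠ i2) : dN k i1 k i2 = k + 1 := by
  have F := dN_form k i1 k i2
  have r1 := rt_spec k i1
  have r2 := rt_spec k i2
  unfold Form at F
  omega

set_option maxHeartbeats 1600000 in
/-- One geodesic step: from `(k1,i1)` towards `(k2,i2)` there is a neighbour one step closer. -/
lemma dN_step (l r : ℕ) (hr : 0 < r) (k1 i1 k2 i2 n : ℕ)
    (hk1 : k1 < l) (hk2 : k2 < l) (hi1 : i1 < r) (hi2 : i2 < r)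
    (h : dN k1 i1 k2 i2 = n + 1) :
    ∃ k3 i3, k3 < l ∧ i3 < r ∧ dN k1 i1 k3 i3 = 1 ∧ dN k3 i3 k2 i2 = n := by
  have F := dN_form k1 i1 k2 i2
  have r1 := rt_spec k1 i1
  have r2 := rt_spec k2 i2
  unfold Form at F
  by_cases hSL : k1 % 2 = k2 % 2 ∧ i1 = i2
  · by_cases hlt : (k1 + 1) / 2 < (k2 + 1) / 2
    · refine ⟨k1 + 2, i1, by omega, hi1, ?_, ?_⟩
      · have F2 := dN_form k1 i1 (k1 + 2) i1
        have r3 := rt_spec (k1 + 2) i1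
        unfold Form at F2; omega
      · have F3 := dN_form (k1 + 2) i1 k2 i2
        have r3 := rt_spec (k1 + 2) i1
        unfold Form at F3; omega
    · refine ⟨k1 - 2, i1, by omega, hi1, ?_, ?_⟩
      · have F2 := dN_form k1 i1 (k1 - 2) i1
        have r3 := rt_spec (k1 - 2) i1
        unfold Form at F2; omega
      · have F3 := dN_form (k1 - 2) i1 k2 i2
        have r3 := rt_spec (k1 - 2) i1
        unfold Form at F3; omega
  · by_cases h2d : 2 ≤ (k1 + 1) / 2
    · refine ⟨k1 - 2, i1, by omega, hi1, ?_, ?_⟩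
      · have F2 := dN_form k1 i1 (k1 - 2) i1
        have r3 := rt_spec (k1 - 2) i1
        unfold Form at F2; omega
      · have F3 := dN_form (k1 - 2) i1 k2 i2
        have r3 := rt_spec (k1 - 2) i1
        unfold Form at F3; omega
    · by_cases h1d : (k1 + 1) / 2 = 1
      · refine ⟨0, rt k1 i1, by omega, by omega, ?_, ?_⟩
        · have F2 := dN_form k1 i1 0 (rt k1 i1)
          have r3 := rt_spec 0 (rt k1 i1)
          unfold Form at F2; omega
        · have F3 := dN_form 0 (rt k1 i1) k2 i2
          have r3 := rt_spec 0 (rt k1 i1)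
          unfold Form at F3; omega
      · by_cases h2z : (k2 + 1) / 2 = 0
        · refine ⟨k2, i2, hk2, hi2, by omega, ?_⟩
          have F4 := dN_form k2 i2 k2 i2
          unfold Form at F4; omega
        · by_cases hRR : i1 = rt k2 i2
          · by_cases hp : k2 % 2 = 1
            · refine ⟨1, i2, by omega, hi2, ?_, ?_⟩
              · have F2 := dN_form k1 i1 1 i2
                have r3 := rt_spec 1 i2
                unfold Form at F2; omega
              · have F3 := dN_form 1 i2 k2 i2
                have r3 := rt_spec 1 i2
                unfold Form at F3; omega
            · refine ⟨2, i2, by omega, hi2, ?_, ?_⟩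
              · have F2 := dN_form k1 i1 2 i2
                have r3 := rt_spec 2 i2
                unfold Form at F2; omega
              · have F3 := dN_form 2 i2 k2 i2
                have r3 := rt_spec 2 i2
                unfold Form at F3; omega
          · refine ⟨0, rt k2 i2, by omega, by omega, ?_, ?_⟩
            · have F2 := dN_form k1 i1 0 (rt k2 i2)
              have r3 := rt_spec 0 (rt k2 i2)
              unfold Form at F2; omega
            · have F3 := dN_form 0 (rt k2 i2) k2 i2
              have r3 := rt_spec 0 (rt k2 i2)
              unfold Form at F3; omega

variable (l r : ℕ)

/-- First coordinate (label minus one) of a vertex. -/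
def KK (v : Fin (l * r)) : ℕ := ((finProdFinEquiv.symm v : Fin l × Fin r).1 : ℕ)

/-- Second coordinate (leg index) of a vertex. -/
def II (v : Fin (l * r)) : ℕ := ((finProdFinEquiv.symm v : Fin l × Fin r).2 : ℕ)

/-- The distance function transported to `Fin (l * r)`. -/
def dV (u v : Fin (l * r)) : ℕ := dN (KK l r u) (II l r u) (KK l r v) (II l r v)

/-- The graph: adjacency is distance one. -/
def myG : SimpleGraph (Fin (l * r)) where
  Adj u v := dV l r u v = 1
  symm := by constructor; intro u v h; unfold dV at h ⊢; rw [dN_symm]; exact h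
  loopless := by constructor; intro u h; unfold dV at h; rw [dN_self] at h; exact one_ne_zero h.symm

variable {l r}

lemma vert_ext {u v : Fin (l * r)} (hK : KK l r u = KK l r v) (hI : II l r u = II l r v) :
    u = v := by
  have : (finProdFinEquiv.symm u : Fin l × Fin r) = finProdFinEquiv.symm v := by
    apply Prod.ext <;> apply Fin.ext <;> assumption
  exact finProdFinEquiv.symm.injective this

lemma KK_lt (u : Fin (l * r)) : KK l r u < l := (finProdFinEquiv.symm u : Fin l × Fin r).1.isLt

lemma II_lt (u : Fin (l * r)) : II l r u < r := (finProdFinEquiv.symm u : Fin l × Fin r).2.isLt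

lemma KK_enc (a : Fin l) (b : Fin r) : KK l r (finProdFinEquiv (a, b)) = a := by
  simp [KK]

lemma II_enc (a : Fin l) (b : Fin r) : II l r (finProdFinEquiv (a, b)) = b := by
  simp [II]

lemma reach (hr : 0 < r) : ∀ n (u v : Fin (l * r)), dV l r u v = n → (myG l r).Reachable u v := by
  intro n
  induction n with
  | zero =>
    intro u v h
    obtain ⟨h1, h2⟩ := dN_eq_zero h
    rw [vert_ext h1 h2]
  | succ n ih =>
    intro u v h
    obtain ⟨k3, i3, hk3, hi3, h1, h2⟩ :=
      dN_step l r hr _ _ _ _ n (KK_lt u) (KK_lt v) (II_lt u) (II_lt v) h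
    set w : Fin (l * r) := finProdFinEquiv (⟨k3, hk3⟩, ⟨i3, hi3⟩) with hw
    have hKw : KK l r w = k3 := KK_enc _ _
    have hIw : II l r w = i3 := II_enc _ _
    have hadj : (myG l r).Adj u w := by
      show dV l r u w = 1
      unfold dV; rw [hKw, hIw]; exact h1
    exact hadj.reachable.trans (ih w v (by unfold dV; rw [hKw, hIw]; exact h2))

lemma myG_connected (hl : 0 < l) (hr : 0 < r) : (myG l r).Connected := by
  rw [SimpleGraph.connected_iff]
  refine ⟨fun u v => reach hr _ u v rfl, ⟨⟨0, Nat.mul_pos hl hr⟩⟩⟩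

lemma dist_le_dV (hl : 0 < l) (hr : 0 < r) :
    ∀ n (u v : Fin (l * r)), dV l r u v = n → (myG l r).dist u v ≤ n := by
  intro n
  induction n with
  | zero =>
    intro u v h
    obtain ⟨h1, h2⟩ := dN_eq_zero h
    rw [vert_ext h1 h2, SimpleGraph.dist_self]
  | succ n ih =>
    intro u v h
    obtain ⟨k3, i3, hk3, hi3, h1, h2⟩ :=
      dN_step l r hr _ _ _ _ n (KK_lt u) (KK_lt v) (II_lt u) (II_lt v) h
    set w : Fin (l * r) := finProdFinEquiv (⟨k3, hk3⟩, ⟨i3, hi3⟩) with hw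
    have hKw : KK l r w = k3 := KK_enc _ _
    have hIw : II l r w = i3 := II_enc _ _
    have hadj : (myG l r).Adj u w := by
      show dV l r u w = 1
      unfold dV; rw [hKw, hIw]; exact h1
    calc (myG l r).dist u v ≤ (myG l r).dist u w + (myG l r).dist w v :=
          (myG_connected hl hr).dist_triangle
      _ ≤ 1 + n := by
          have h1' : (myG l r).dist u w ≤ 1 :=
            SimpleGraph.dist_le (SimpleGraph.Walk.cons hadj SimpleGraph.Walk.nil)
          have h2' : (myG l r).dist w v ≤ n := ih w v (by unfold dV; rw [hKw, hIw]; exact h2)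
          omega
      _ = n + 1 := by omega

lemma dV_le_walk : ∀ {u v : Fin (l * r)} (p : (myG l r).Walk u v), dV l r u v ≤ p.length := by
  intro u v p
  induction p with
  | nil => unfold dV; rw [dN_self]; exact Nat.zero_le _
  | @cons a b c hab q ih =>
    have hab' : dV l r a b = 1 := hab
    calc dV l r a c ≤ dV l r a b + dV l r b c := dN_triangle _ _ _ _ _ _
      _ ≤ 1 + q.length := by omega
      _ = (SimpleGraph.Walk.cons hab q).length := by
          rw [SimpleGraph.Walk.length_cons]; omega

lemma dist_eq_dV (hl : 0 < l) (hr : 0 < r) (u v : Fin (l * r)) :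
    (myG l r).dist u v = dV l r u v := by
  refine le_antisymm (dist_le_dV hl hr _ u v rfl) ?_
  obtain ⟨p, hp⟩ := ((myG_connected hl hr) u v).exists_walk_length_eq_dist
  calc dV l r u v ≤ p.length := dV_le_walk p
    _ = (myG l r).dist u v := hp

theorem exists_graph_regular_distance_labeling (l r : ℕ) (hl : 0 < l) (hr : 0 < r) :
    ∃ G : SimpleGraph (Fin (l * r)), G.Connected ∧
      ∃ f : Fin (l * r) → ℕ, IsRegularDistLabeling G l r f := by
  refine ⟨myG l r, myG_connected hl hr, fun v => KK l r v + 1, ?_, ?_⟩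
  · constructor
    · right
      ext m
      simp only [Set.mem_range, Set.mem_Icc]
      constructor
      · rintro ⟨v, rfl⟩
        have := KK_lt v
        omega
      · rintro ⟨h1, h2⟩
        refine ⟨finProdFinEquiv (⟨m - 1, by omega⟩, ⟨0, hr⟩), ?_⟩
        show KK l r (finProdFinEquiv (⟨m - 1, by omega⟩, ⟨0, hr⟩)) + 1 = m
        rw [KK_enc]
        show m - 1 + 1 = m
        omega
    · intro u v huv hf
      have hf' : KK l r u + 1 = KK l r v + 1 := hf
      have hK : KK l r u = KK l r v := by omega
      have hI : II l r u ≠ II l r v := fun hI => huv (vert_ext hK hI)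
      show (myG l r).dist u v = KK l r u + 1
      rw [dist_eq_dV hl hr]
      unfold dV
      rw [hK, dN_same_k hI]
  · intro m hm1 hm2
    show (Finset.univ.filter (fun v : Fin (l * r) => KK l r v + 1 = m)).card = r
    have hinj : Function.Injective
        (fun i : Fin r => finProdFinEquiv ((⟨m - 1, by omega⟩ : Fin l), i)) := by
      intro a b hab
      have := finProdFinEquiv.injective hab
      exact (Prod.mk.injEq _ _ _ _).mp this |>.2
    have hset : Finset.univ.filter (fun v : Fin (l * r) => KK l r v + 1 = m) =
        Finset.univ.map ⟨fun i : Fin r => finProdFinEquiv ((⟨m - 1, by omega⟩ : Fin l), i), hinj⟩ := by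
      ext v
      simp only [Finset.mem_filter, Finset.mem_univ, true_and, Finset.mem_map,
        Function.Embedding.coeFn_mk]
      constructor
      · intro hv
        refine ⟨(finProdFinEquiv.symm v : Fin l × Fin r).2, ?_⟩
        have h1 : (finProdFinEquiv.symm v : Fin l × Fin r).1 = (⟨m - 1, by omega⟩ : Fin l) := by
          apply Fin.ext
          show KK l r v = m - 1
          omega
        calc finProdFinEquiv ((⟨m - 1, by omega⟩ : Fin l),
              (finProdFinEquiv.symm v : Fin l × Fin r).2)
            = finProdFinEquiv ((finProdFinEquiv.symm v : Fin l × Fin r).1,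
                (finProdFinEquiv.symm v : Fin l × Fin r).2) := by rw [h1]
          _ = v := by rw [Prod.mk.eta, Equiv.apply_symm_apply]
      · rintro ⟨i, rfl⟩
        rw [KK_enc]
        show m - 1 + 1 = m
        omega
    rw [hset, Finset.card_map, Finset.card_univ, Fintype.card_fin]
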